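/- Thompson's group T is finitely presented: letting G be the group with presentation on three generators a, b, t with relators [a b^{-1}, a^{-1} b a] = 1, [a b^{-1}, a^{-2} b a^2] = 1, b·t_3 = t_2·(a^{-1} b a), t·a = t_2^2, b·t_2 = t, and t^3 = 1, where t_2 denotes a^{-1} t b and t_3 denotes a^{-2} t b^2, the homomorphism G → T determined by a ↦ x_0, b ↦ x_1, t ↦ c_1 is an isomorphism. -/

import Mathlib

section Aux

lemma PresentedGroup.mk_rel_eq_one {α : Type*} {rels : Set (FreeGroup α)} {r : FreeGroup α}
    (h : r ∈ rels) : PresentedGroup.mk rels r = 1 :=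
  (QuotientGroup.eq_one_iff r).2 (Subgroup.subset_normalClosure h)

end Aux


/-- Relators of the standard infinite presentation of Thompson's group `T`,
on generators `Sum.inl i ↦ x_i` and `Sum.inr i ↦ c_i`. -/
def TRel : Set (FreeGroup (ℕ ⊕ ℕ)) :=
  { r | (∃ i j : ℕ, i < j ∧
        r = FreeGroup.of (Sum.inl j) * FreeGroup.of (Sum.inl i) *
            (FreeGroup.of (Sum.inl i) * FreeGroup.of (Sum.inl (j + 1)))⁻¹) ∨
    (∃ k n : ℕ, k < n ∧
        r = FreeGroup.of (Sum.inl k) * FreeGroup.of (Sum.inr (n + 1)) *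
            (FreeGroup.of (Sum.inr n) * FreeGroup.of (Sum.inl (k + 1)))⁻¹) ∨
    (∃ n : ℕ, r = FreeGroup.of (Sum.inr n) * FreeGroup.of (Sum.inl 0) *
            ((FreeGroup.of (Sum.inr (n + 1))) ^ 2)⁻¹) ∨
    (∃ n : ℕ, r = FreeGroup.of (Sum.inr n) *
            (FreeGroup.of (Sum.inl n) * FreeGroup.of (Sum.inr (n + 1)))⁻¹) ∨
    (∃ n : ℕ, r = (FreeGroup.of (Sum.inr n)) ^ (n + 2)) }

/-- Thompson's group `T`. -/
abbrev ThompsonT : Type := PresentedGroup TRel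

/-- The generator `x_i` of `T`. -/
def x (i : ℕ) : ThompsonT := PresentedGroup.of (Sum.inl i)

/-- The torsion generator `c_i` of `T`. -/
def c (i : ℕ) : ThompsonT := PresentedGroup.of (Sum.inr i)

lemma xT1 {i j : ℕ} (h : i < j) : x j * x i = x i * x (j + 1) := by
  have h1 := PresentedGroup.mk_rel_eq_one (rels := TRel) (Or.inl ⟨i, j, h, rfl⟩)
  rw [map_mul, map_mul, map_inv, map_mul, mul_inv_eq_one] at h1
  exact h1

lemma cT2 {k n : ℕ} (h : k < n) : x k * c (n + 1) = c n * x (k + 1) := by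
  have h1 := PresentedGroup.mk_rel_eq_one (rels := TRel) (Or.inr (Or.inl ⟨k, n, h, rfl⟩))
  rw [map_mul, map_mul, map_inv, map_mul, mul_inv_eq_one] at h1
  exact h1

lemma cT3 (n : ℕ) : c n * x 0 = (c (n + 1)) ^ 2 := by
  have h1 := PresentedGroup.mk_rel_eq_one (rels := TRel) (Or.inr (Or.inr (Or.inl ⟨n, rfl⟩)))
  rw [map_mul, map_mul, map_inv, map_pow, mul_inv_eq_one] at h1
  exact h1

lemma cT4 (n : ℕ) : c n = x n * c (n + 1) := by
  have h1 := PresentedGroup.mk_rel_eq_one (rels := TRel)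
    (Or.inr (Or.inr (Or.inr (Or.inl ⟨n, rfl⟩))))
  rw [map_mul, map_inv, map_mul, mul_inv_eq_one] at h1
  exact h1

lemma cT5 (n : ℕ) : (c n) ^ (n + 2) = 1 := by
  have h1 := PresentedGroup.mk_rel_eq_one (rels := TRel)
    (Or.inr (Or.inr (Or.inr (Or.inr ⟨n, rfl⟩))))
  rw [map_pow] at h1
  exact h1

lemma xT_formula (i : ℕ) : x (i + 1) = ((x 0)⁻¹) ^ i * x 1 * (x 0) ^ i := by
  induction i with
  | zero => simp
  | succ i ih =>
    have h := xT1 (show 0 < i + 1 from Nat.succ_pos i)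
    have h2 : x (i + 1 + 1) = (x 0)⁻¹ * x (i + 1) * x 0 := by
      refine mul_left_cancel (a := x 0) ?_
      rw [← h]; group
    rw [h2, ih]
    rw [pow_succ', pow_succ]
    group

lemma cT_formula (n : ℕ) : c (n + 1) = ((x 0)⁻¹) ^ n * c 1 * (x 1) ^ n := by
  induction n with
  | zero => simp
  | succ n ih =>
    have h := cT2 (show 0 < n + 1 from Nat.succ_pos n)
    simp only [zero_add] at h
    have h2 : c (n + 1 + 1) = (x 0)⁻¹ * c (n + 1) * x 1 := by
      refine mul_left_cancel (a := x 0) ?_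
      rw [h]; group
    rw [h2, ih, pow_succ', pow_succ]
    group

lemma cT_zero : c 0 = x 0 * c 1 := cT4 0

open scoped commutatorElement in
/-- Relators of the finite presentation of Thompson's group `T` on three generators
`a, b, t` (sent to `x_0, x_1, c_1`), where `t_2 := a⁻¹ t b` and `t_3 := a⁻² t b²`. -/
def TFinRel : Set (FreeGroup (Fin 3)) :=
  let a : FreeGroup (Fin 3) := FreeGroup.of 0
  let b : FreeGroup (Fin 3) := FreeGroup.of 1
  let t : FreeGroup (Fin 3) := FreeGroup.of 2
  let t2 : FreeGroup (Fin 3) := a⁻¹ * t * b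
  let t3 : FreeGroup (Fin 3) := a⁻¹ ^ 2 * t * b ^ 2
  { ⁅a * b⁻¹, a⁻¹ * b * a⁆,
    ⁅a * b⁻¹, a⁻¹ ^ 2 * b * a ^ 2⁆,
    b * t3 * (t2 * (a⁻¹ * b * a))⁻¹,
    t * a * (t2 ^ 2)⁻¹,
    b * t2 * t⁻¹,
    t ^ 3 }

abbrev GFin : Type := PresentedGroup TFinRel

def Ag : GFin := PresentedGroup.of 0
def Bg : GFin := PresentedGroup.of 1
def Tg : GFin := PresentedGroup.of 2

/-- images of `x_i` in `GFin` -/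
def Xg : ℕ → GFin
  | 0 => Ag
  | (i+1) => (Ag⁻¹) ^ i * Bg * Ag ^ i

/-- images of `c_n` in `GFin` -/
def Cg : ℕ → GFin
  | 0 => Ag * Tg
  | (n+1) => (Ag⁻¹) ^ n * Tg * Bg ^ n

lemma g1 : (Ag * Bg⁻¹) * (Ag⁻¹ * Bg * Ag) = (Ag⁻¹ * Bg * Ag) * (Ag * Bg⁻¹) := by
  have h := PresentedGroup.mk_rel_eq_one (rels := TFinRel) (Set.mem_insert _ _)
  rw [map_commutatorElement, commutatorElement_eq_one_iff_mul_comm] at h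
  simp only [map_mul, map_inv] at h
  exact h

lemma g2 : (Ag * Bg⁻¹) * ((Ag⁻¹) ^ 2 * Bg * Ag ^ 2) = ((Ag⁻¹) ^ 2 * Bg * Ag ^ 2) * (Ag * Bg⁻¹) := by
  have h := PresentedGroup.mk_rel_eq_one (rels := TFinRel)
    (Set.mem_insert_of_mem _ (Set.mem_insert _ _))
  rw [map_commutatorElement, commutatorElement_eq_one_iff_mul_comm] at h
  simp only [map_mul, map_inv, map_pow] at h
  exact h

lemma g3 : Bg * ((Ag⁻¹) ^ 2 * Tg * Bg ^ 2) = (Ag⁻¹ * Tg * Bg) * (Ag⁻¹ * Bg * Ag) := by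
  have h := PresentedGroup.mk_rel_eq_one (rels := TFinRel)
    (Set.mem_insert_of_mem _ (Set.mem_insert_of_mem _ (Set.mem_insert _ _)))
  rw [map_mul, map_inv, mul_inv_eq_one] at h
  simp only [map_mul, map_inv, map_pow] at h
  exact h

lemma g4 : Tg * Ag = (Ag⁻¹ * Tg * Bg) ^ 2 := by
  have h := PresentedGroup.mk_rel_eq_one (rels := TFinRel)
    (Set.mem_insert_of_mem _ (Set.mem_insert_of_mem _ (Set.mem_insert_of_mem _
      (Set.mem_insert _ _))))
  rw [map_mul, map_inv, mul_inv_eq_one] at h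
  simp only [map_mul, map_inv, map_pow] at h
  exact h

lemma g5 : Bg * (Ag⁻¹ * Tg * Bg) = Tg := by
  have h := PresentedGroup.mk_rel_eq_one (rels := TFinRel)
    (Set.mem_insert_of_mem _ (Set.mem_insert_of_mem _ (Set.mem_insert_of_mem _
      (Set.mem_insert_of_mem _ (Set.mem_insert _ _)))))
  rw [map_mul, map_inv, mul_inv_eq_one] at h
  simp only [map_mul, map_inv] at h
  exact h

lemma g6 : Tg ^ 3 = 1 := by
  have h := PresentedGroup.mk_rel_eq_one (rels := TFinRel)
    (Set.mem_insert_of_mem _ (Set.mem_insert_of_mem _ (Set.mem_insert_of_mem _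
      (Set.mem_insert_of_mem _ (Set.mem_insert_of_mem _ rfl)))))
  rw [map_pow] at h
  exact h

lemma conj_switch {G : Type*} [Group G] {a b q : G} (h : (a * b⁻¹) * q = q * (a * b⁻¹)) :
    b⁻¹ * q * b = a⁻¹ * q * a := by
  calc b⁻¹ * q * b = b⁻¹ * ((a * b⁻¹)⁻¹ * ((a * b⁻¹) * q)) * b := by group
    _ = b⁻¹ * ((a * b⁻¹)⁻¹ * (q * (a * b⁻¹))) * b := by rw [h]
    _ = a⁻¹ * q * a := by group

lemma Xg_one : Xg 1 = Bg := by simp [Xg]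

lemma Xg_conj (m p : ℕ) : (Ag⁻¹) ^ p * Xg (m + 1) * Ag ^ p = Xg (m + p + 1) := by
  have h1 : Xg (m + p + 1) = (Ag⁻¹) ^ (m + p) * Bg * Ag ^ (m + p) := rfl
  have h2 : Xg (m + 1) = (Ag⁻¹) ^ m * Bg * Ag ^ m := rfl
  rw [h1, h2, pow_add, pow_add]
  group

lemma Xg_succ_succ (k : ℕ) : Xg (k + 2) = Ag⁻¹ * Xg (k + 1) * Ag := by
  have h : (Ag⁻¹) ^ 1 * Xg (k + 1) * Ag ^ 1 = Xg (k + 2) := Xg_conj k 1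
  rw [← h]; group

lemma Bg_conj : ∀ m : ℕ, Bg⁻¹ * Xg (m + 2) * Bg = Xg (m + 3) := by
  intro m
  induction m using Nat.strong_induction_on with
  | _ m ih =>
    match m with
    | 0 =>
      have h2 : Xg 2 = Ag⁻¹ * Bg * Ag := by
        have : Xg 2 = (Ag⁻¹) ^ 1 * Bg * Ag ^ 1 := rfl
        simpa using this
      have key : Bg⁻¹ * Xg 2 * Bg = Ag⁻¹ * Xg 2 * Ag := by
        refine conj_switch ?_
        rw [h2]; exact g1
      rw [key]
      exact (Xg_succ_succ 1).symm
    | 1 =>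
      have h3 : Xg 3 = (Ag⁻¹) ^ 2 * Bg * Ag ^ 2 := rfl
      have key : Bg⁻¹ * Xg 3 * Bg = Ag⁻¹ * Xg 3 * Ag := by
        refine conj_switch ?_
        rw [h3]; exact g2
      rw [key]
      exact (Xg_succ_succ 2).symm
    | (k+2) =>
      have ih1 : Bg⁻¹ * Xg (k + 2) * Bg = Xg (k + 3) := ih k (by omega)
      have ih2 : Bg⁻¹ * Xg (k + 3) * Bg = Xg (k + 4) := ih (k + 1) (by omega)
      have ih0 : Bg⁻¹ * Xg 2 * Bg = Xg 3 := ih 0 (by omega)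
      have hX2 : Xg 2 = Ag⁻¹ * Xg 1 * Ag := Xg_succ_succ 0
      have hX3 : Xg 3 = Ag⁻¹ * Xg 2 * Ag := Xg_succ_succ 1
      have hX4 : Xg (k + 4) = Ag⁻¹ * Xg (k + 3) * Ag := Xg_succ_succ (k + 2)
      have hX5 : Xg (k + 5) = Ag⁻¹ * Xg (k + 4) * Ag := Xg_succ_succ (k + 3)
      have hXk3 : Xg (k + 3) = Ag⁻¹ * Xg (k + 2) * Ag := Xg_succ_succ (k + 1)
      have hb : (Xg 1)⁻¹ * Xg (k + 2) * Xg 1 = Xg (k + 3) := by rw [Xg_one]; exact ih1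
      have conj2 : (Xg 2)⁻¹ * Xg (k + 3) * Xg 2 = Xg (k + 4) := by
        calc (Xg 2)⁻¹ * Xg (k + 3) * Xg 2
            = Ag⁻¹ * ((Xg 1)⁻¹ * Xg (k + 2) * Xg 1) * Ag := by rw [hX2, hXk3]; group
          _ = Ag⁻¹ * Xg (k + 3) * Ag := by rw [hb]
          _ = Xg (k + 4) := hX4.symm
      have conj3 : (Xg 3)⁻¹ * Xg (k + 4) * Xg 3 = Xg (k + 5) := by
        calc (Xg 3)⁻¹ * Xg (k + 4) * Xg 3
            = Ag⁻¹ * ((Xg 2)⁻¹ * Xg (k + 3) * Xg 2) * Ag := by rw [hX3, hX4]; group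
          _ = Ag⁻¹ * Xg (k + 4) * Ag := by rw [conj2]
          _ = Xg (k + 5) := hX5.symm
      calc Bg⁻¹ * Xg (k + 4) * Bg
          = (Bg⁻¹ * (Xg 2)⁻¹ * Bg) * (Bg⁻¹ * Xg (k + 3) * Bg) * (Bg⁻¹ * Xg 2 * Bg) := by
            rw [← conj2]; group
        _ = (Bg⁻¹ * (Xg 2)⁻¹ * Bg) * Xg (k + 4) * Xg 3 := by rw [ih2, ih0]
        _ = (Xg 3)⁻¹ * Xg (k + 4) * Xg 3 := by
            have hb3 : Bg⁻¹ * (Xg 2)⁻¹ * Bg = (Xg 3)⁻¹ := by rw [← ih0]; group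
            rw [hb3]
        _ = Xg (k + 5) := conj3

lemma Xg_R1 {i j : ℕ} (h : i < j) : Xg j * Xg i = Xg i * Xg (j + 1) := by
  match i, h with
  | 0, h =>
    obtain ⟨m, rfl⟩ : ∃ m, j = m + 1 := ⟨j - 1, by omega⟩
    have h2 : Xg (m + 2) = Ag⁻¹ * Xg (m + 1) * Ag := Xg_succ_succ m
    show Xg (m + 1) * Xg 0 = Xg 0 * Xg (m + 2)
    rw [h2]
    show Xg (m + 1) * Ag = Ag * (Ag⁻¹ * Xg (m + 1) * Ag)
    group
  | (k+1), h =>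
    obtain ⟨e, rfl⟩ : ∃ e, j = k + 2 + e := ⟨j - (k + 2), by omega⟩
    have hc1 : (Ag⁻¹) ^ k * Xg (e + 2) * Ag ^ k = Xg (k + 2 + e) := by
      have h0 := Xg_conj (e + 1) k
      rwa [show e + 1 + k + 1 = k + 2 + e from by omega] at h0
    have hc2 : (Ag⁻¹) ^ k * Xg (e + 3) * Ag ^ k = Xg (k + 2 + e + 1) := by
      have h0 := Xg_conj (e + 2) k
      rwa [show e + 2 + k + 1 = k + 2 + e + 1 from by omega] at h0
    have hB : Xg (e + 2) * Bg = Bg * Xg (e + 3) := by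
      rw [← Bg_conj e]; group
    have hXk : Xg (k + 1) = (Ag⁻¹) ^ k * Bg * Ag ^ k := rfl
    calc Xg (k + 2 + e) * Xg (k + 1)
        = ((Ag⁻¹) ^ k * Xg (e + 2) * Ag ^ k) * ((Ag⁻¹) ^ k * Bg * Ag ^ k) := by
          rw [hc1, ← hXk]
      _ = (Ag⁻¹) ^ k * (Xg (e + 2) * Bg) * Ag ^ k := by group
      _ = (Ag⁻¹) ^ k * (Bg * Xg (e + 3)) * Ag ^ k := by rw [hB]
      _ = ((Ag⁻¹) ^ k * Bg * Ag ^ k) * ((Ag⁻¹) ^ k * Xg (e + 3) * Ag ^ k) := by group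
      _ = Xg (k + 1) * Xg (k + 2 + e + 1) := by rw [hc2, ← hXk]

lemma Cg_one : Cg 1 = Tg := by simp [Cg]

lemma Cg_succ (n : ℕ) : Cg (n + 2) = Ag⁻¹ * Cg (n + 1) * Bg := by
  have h1 : Cg (n + 2) = (Ag⁻¹) ^ (n + 1) * Tg * Bg ^ (n + 1) := rfl
  have h2 : Cg (n + 1) = (Ag⁻¹) ^ n * Tg * Bg ^ n := rfl
  rw [h1, h2, pow_succ', pow_succ]
  group

lemma Cg_R4 (n : ℕ) : Cg n = Xg n * Cg (n + 1) := by
  match n with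
  | 0 => show Ag * Tg = Ag * ((Ag⁻¹) ^ 0 * Tg * Bg ^ 0); simp
  | (m+1) =>
    have h1 : Xg (m + 1) = (Ag⁻¹) ^ m * Bg * Ag ^ m := rfl
    have h2 : Cg (m + 2) = (Ag⁻¹) ^ (m + 1) * Tg * Bg ^ (m + 1) := rfl
    have h3 : Cg (m + 1) = (Ag⁻¹) ^ m * Tg * Bg ^ m := rfl
    rw [h1, h2, h3]
    calc (Ag⁻¹) ^ m * Tg * Bg ^ m
        = (Ag⁻¹) ^ m * (Bg * (Ag⁻¹ * Tg * Bg)) * Bg ^ m := by rw [g5]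
      _ = (Ag⁻¹) ^ m * Bg * Ag ^ m * ((Ag⁻¹) ^ (m + 1) * Tg * Bg ^ (m + 1)) := by
          rw [pow_succ' (Ag⁻¹), pow_succ Bg]; group

/-- relation (2) for `k = 1`. -/
lemma Cg_R2_one : ∀ n : ℕ, Xg 1 * Cg (n + 3) = Cg (n + 2) * Xg 2 := by
  intro n
  induction n with
  | zero =>
    have h1 : Cg 3 = (Ag⁻¹) ^ 2 * Tg * Bg ^ 2 := rfl
    have h2 : Cg 2 = (Ag⁻¹) ^ 1 * Tg * Bg ^ 1 := rfl
    have h3 : Xg 2 = (Ag⁻¹) ^ 1 * Bg * Ag ^ 1 := rfl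
    rw [Xg_one, h1, h2, h3, pow_one, pow_one, pow_one]
    exact g3
  | succ n ih =>
    have hR4a : Cg (n + 3) = Xg (n + 3) * Cg (n + 4) := Cg_R4 (n + 3)
    have hR4b : Cg (n + 2) = Xg (n + 2) * Cg (n + 3) := Cg_R4 (n + 2)
    have hR1 : Xg (n + 2) * Xg 1 = Xg 1 * Xg (n + 3) := Xg_R1 (by omega)
    calc Xg 1 * Cg (n + 4)
        = Xg 1 * (Xg (n + 3))⁻¹ * Cg (n + 3) := by rw [hR4a]; group
      _ = (Xg (n + 2))⁻¹ * (Xg (n + 2) * Xg 1) * (Xg (n + 3))⁻¹ * Cg (n + 3) := by group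
      _ = (Xg (n + 2))⁻¹ * (Xg 1 * Xg (n + 3)) * (Xg (n + 3))⁻¹ * Cg (n + 3) := by rw [hR1]
      _ = (Xg (n + 2))⁻¹ * (Xg 1 * Cg (n + 3)) := by group
      _ = (Xg (n + 2))⁻¹ * (Cg (n + 2) * Xg 2) := by rw [ih]
      _ = (Xg (n + 2))⁻¹ * (Xg (n + 2) * Cg (n + 3)) * Xg 2 := by rw [← hR4b]; group
      _ = Cg (n + 3) * Xg 2 := by group

lemma Cg_R2 : ∀ k n : ℕ, k < n → Xg k * Cg (n + 1) = Cg n * Xg (k + 1) := by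
  intro k
  induction k with
  | zero =>
    intro n hn
    obtain ⟨m, rfl⟩ : ∃ m, n = m + 1 := ⟨n - 1, by omega⟩
    have h1 : Cg (m + 2) = Ag⁻¹ * Cg (m + 1) * Bg := Cg_succ m
    show Xg 0 * Cg (m + 2) = Cg (m + 1) * Xg 1
    rw [h1, Xg_one]
    show Ag * (Ag⁻¹ * Cg (m + 1) * Bg) = Cg (m + 1) * Bg
    group
  | succ k ihk =>
    intro n hn
    match k, n, hn with
    | 0, n, hn =>
      obtain ⟨m, rfl⟩ : ∃ m, n = m + 2 := ⟨n - 2, by omega⟩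
      exact Cg_R2_one m
    | (j+1), n, hn =>
      -- k = j + 2, so n ≥ j + 3
      obtain ⟨m, rfl⟩ : ∃ m, n = m + 1 := ⟨n - 1, by omega⟩
      have hm : j + 1 < m := by omega
      have ih : Xg (j + 1) * Cg (m + 1) = Cg m * Xg (j + 2) := ihk m hm
      have hX : Xg (j + 3) = Ag⁻¹ * Xg (j + 2) * Ag := Xg_succ_succ (j + 1)
      have hC : Cg (m + 2) = Ag⁻¹ * Cg (m + 1) * Bg := Cg_succ m
      have hCm : Cg (m + 1) = Ag⁻¹ * Cg m * Bg := by
        obtain ⟨p, rfl⟩ : ∃ p, m = p + 1 := ⟨m - 1, by omega⟩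
        exact Cg_succ p
      have hBc : Bg⁻¹ * Xg (j + 2) * Bg = Xg (j + 3) := Bg_conj j
      calc Xg (j + 2) * Cg (m + 2)
          = (Ag⁻¹ * Xg (j + 1) * Ag) * (Ag⁻¹ * Cg (m + 1) * Bg) := by
            rw [← hC, ← (Xg_succ_succ j : Xg (j + 2) = _)]
        _ = Ag⁻¹ * (Xg (j + 1) * Cg (m + 1)) * Bg := by group
        _ = Ag⁻¹ * (Cg m * Xg (j + 2)) * Bg := by rw [ih]
        _ = (Ag⁻¹ * Cg m * Bg) * (Bg⁻¹ * Xg (j + 2) * Bg) := by group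
        _ = Cg (m + 1) * Xg (j + 3) := by rw [← hCm, hBc]

lemma Cg_R3 : ∀ n : ℕ, Cg n * Xg 0 = (Cg (n + 1)) ^ 2 := by
  intro n
  induction n with
  | zero =>
    have h1 : Cg 1 = Tg := Cg_one
    show Cg 0 * Ag = (Cg 1) ^ 2
    rw [h1]
    show Ag * Tg * Ag = Tg ^ 2
    have h4 := g4
    have h5 := g5
    calc Ag * Tg * Ag
        = Ag * (Tg * Ag) := by group
      _ = Ag * (Ag⁻¹ * Tg * Bg) ^ 2 := by rw [g4]
      _ = Tg * (Bg * (Ag⁻¹ * Tg * Bg)) := by rw [sq]; group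
      _ = Tg * Tg := by rw [g5]
      _ = Tg ^ 2 := by rw [sq]
  | succ n ih =>
    have hR4 : Cg n = Xg n * Cg (n + 1) := Cg_R4 n
    have hR4' : Cg (n + 1) = Xg (n + 1) * Cg (n + 2) := Cg_R4 (n + 1)
    have hR2 : Xg n * Cg (n + 2) = Cg (n + 1) * Xg (n + 1) := Cg_R2 n (n + 1) (by omega)
    have h1 : Cg (n + 2) = (Xg n)⁻¹ * (Cg (n + 1) * Xg (n + 1)) := by
      rw [← hR2]; group
    have h2 : (Xg (n + 1))⁻¹ * Cg (n + 1) = Cg (n + 2) := by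
      rw [hR4']; group
    calc Cg (n + 1) * Xg 0
        = (Xg n)⁻¹ * (Cg n * Xg 0) := by rw [hR4]; group
      _ = (Xg n)⁻¹ * (Cg (n + 1)) ^ 2 := by rw [ih]
      _ = (Xg n)⁻¹ * (Cg (n + 1) * Xg (n + 1)) * ((Xg (n + 1))⁻¹ * Cg (n + 1)) := by
          rw [sq]; group
      _ = Cg (n + 2) * Cg (n + 2) := by rw [← h1, h2]
      _ = (Cg (n + 2)) ^ 2 := by rw [sq]

lemma Cg_pow (n : ℕ) : ∀ j : ℕ, j ≤ n → (Cg (n + 1)) ^ (j + 2) = (Cg n) ^ (j + 1) * Xg j := by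
  intro j
  induction j with
  | zero =>
    intro _
    have := Cg_R3 n
    simpa [pow_one] using this.symm
  | succ j ih =>
    intro hj
    have ih' := ih (by omega)
    have hR2 : Xg j * Cg (n + 1) = Cg n * Xg (j + 1) := Cg_R2 j n (by omega)
    calc (Cg (n + 1)) ^ (j + 3)
        = (Cg (n + 1)) ^ (j + 2) * Cg (n + 1) := by rw [← pow_succ]
      _ = (Cg n) ^ (j + 1) * (Xg j * Cg (n + 1)) := by rw [ih']; group
      _ = (Cg n) ^ (j + 1) * (Cg n * Xg (j + 1)) := by rw [hR2]
      _ = (Cg n) ^ (j + 2) * Xg (j + 1) := by rw [pow_succ]; group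

lemma Cg_R5 : ∀ n : ℕ, (Cg n) ^ (n + 2) = 1 := by
  intro n
  induction n with
  | zero =>
    have h3 : Cg 0 * Xg 0 = (Cg 1) ^ 2 := Cg_R3 0
    have h1 : Cg 1 = Tg := Cg_one
    show (Cg 0) ^ 2 = 1
    have hATA : Ag * Tg * Ag = Tg ^ 2 := by
      have := Cg_R3 0
      rw [Cg_one] at this
      exact this
    have : (Cg 0) ^ 2 = Ag * Tg * Ag * Tg := by
      show (Ag * Tg) ^ 2 = Ag * Tg * Ag * Tg
      rw [sq]; group
    rw [this, hATA, ← g6]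
    group
  | succ n ih =>
    have hp : (Cg (n + 1)) ^ (n + 2) = (Cg n) ^ (n + 1) * Xg n := Cg_pow n n le_rfl
    have hR4 : Cg n = Xg n * Cg (n + 1) := Cg_R4 n
    calc (Cg (n + 1)) ^ (n + 3)
        = (Cg (n + 1)) ^ (n + 2) * Cg (n + 1) := by rw [← pow_succ]
      _ = (Cg n) ^ (n + 1) * Xg n * ((Xg n)⁻¹ * Cg n) := by
          rw [hp, hR4]; group
      _ = (Cg n) ^ (n + 2) := by rw [pow_succ]; group
      _ = 1 := ih

lemma h_x2 : x 2 = (x 0)⁻¹ * x 1 * x 0 := by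
  have h : x 1 * x 0 = x 0 * x 2 := xT1 (by omega)
  refine mul_left_cancel (a := x 0) ?_
  rw [← h]; group

lemma h_x3 : x 3 = (x 0)⁻¹ * x 2 * x 0 := by
  have h : x 2 * x 0 = x 0 * x 3 := xT1 (by omega)
  refine mul_left_cancel (a := x 0) ?_
  rw [← h]; group

lemma h_c2 : c 2 = (x 0)⁻¹ * c 1 * x 1 := by
  have := cT_formula 1
  simpa using this

lemma h_c3 : c 3 = ((x 0)⁻¹) ^ 2 * c 1 * (x 1) ^ 2 := cT_formula 2

lemma tL1 : (x 0 * (x 1)⁻¹) * ((x 0)⁻¹ * x 1 * x 0) = ((x 0)⁻¹ * x 1 * x 0) * (x 0 * (x 1)⁻¹) := by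
  rw [← h_x2]
  have h02 : x 2 * x 0 = x 0 * x 3 := xT1 (by omega)
  have h12 : x 2 * x 1 = x 1 * x 3 := xT1 (by omega)
  refine Eq.symm ?_
  calc x 2 * (x 0 * (x 1)⁻¹)
      = (x 2 * x 0) * (x 1)⁻¹ := by group
    _ = (x 0 * x 3) * (x 1)⁻¹ := by rw [h02]
    _ = (x 0 * (x 1)⁻¹) * ((x 1 * x 3) * (x 1)⁻¹) := by group
    _ = (x 0 * (x 1)⁻¹) * ((x 2 * x 1) * (x 1)⁻¹) := by rw [h12]
    _ = (x 0 * (x 1)⁻¹) * x 2 := by group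

lemma tL2 : (x 0 * (x 1)⁻¹) * (((x 0)⁻¹) ^ 2 * x 1 * (x 0) ^ 2)
    = (((x 0)⁻¹) ^ 2 * x 1 * (x 0) ^ 2) * (x 0 * (x 1)⁻¹) := by
  have hx3 : ((x 0)⁻¹) ^ 2 * x 1 * (x 0) ^ 2 = x 3 := by
    rw [h_x3, h_x2, pow_two, pow_two]; group
  rw [hx3]
  have h03 : x 3 * x 0 = x 0 * x 4 := xT1 (by omega)
  have h13 : x 3 * x 1 = x 1 * x 4 := xT1 (by omega)
  refine Eq.symm ?_
  calc x 3 * (x 0 * (x 1)⁻¹)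
      = (x 3 * x 0) * (x 1)⁻¹ := by group
    _ = (x 0 * x 4) * (x 1)⁻¹ := by rw [h03]
    _ = (x 0 * (x 1)⁻¹) * ((x 1 * x 4) * (x 1)⁻¹) := by group
    _ = (x 0 * (x 1)⁻¹) * ((x 3 * x 1) * (x 1)⁻¹) := by rw [h13]
    _ = (x 0 * (x 1)⁻¹) * x 3 := by group

lemma tL3 : x 1 * (((x 0)⁻¹) ^ 2 * c 1 * (x 1) ^ 2)
    = ((x 0)⁻¹ * c 1 * x 1) * ((x 0)⁻¹ * x 1 * x 0) := by
  rw [← h_c3, ← h_c2, ← h_x2]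
  exact cT2 (by omega)

lemma tL4 : c 1 * x 0 = ((x 0)⁻¹ * c 1 * x 1) ^ 2 := by
  rw [← h_c2]; exact cT3 1

lemma tL5 : x 1 * ((x 0)⁻¹ * c 1 * x 1) = c 1 := by
  rw [← h_c2]; exact (cT4 1).symm

lemma tL6 : (c 1) ^ 3 = 1 := cT5 1

/-- the map defining `ψ : GFin →* T`. -/
def fpsi : Fin 3 → ThompsonT
  | 0 => x 0
  | 1 => x 1
  | 2 => c 1

lemma hpsi : ∀ r ∈ TFinRel, FreeGroup.lift fpsi r = 1 := by
  intro r hr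
  simp only [TFinRel, Set.mem_insert_iff, Set.mem_singleton_iff] at hr
  have e0 : FreeGroup.lift fpsi (FreeGroup.of 0) = x 0 := FreeGroup.lift_apply_of
  have e1 : FreeGroup.lift fpsi (FreeGroup.of 1) = x 1 := FreeGroup.lift_apply_of
  have e2 : FreeGroup.lift fpsi (FreeGroup.of 2) = c 1 := FreeGroup.lift_apply_of
  rcases hr with rfl | rfl | rfl | rfl | rfl | rfl
  · rw [map_commutatorElement, commutatorElement_eq_one_iff_mul_comm,
      map_mul, map_inv, map_mul, map_mul, map_inv, e0, e1]
    exact tL1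
  · rw [map_commutatorElement, commutatorElement_eq_one_iff_mul_comm,
      map_mul, map_inv, map_mul, map_mul, map_pow, map_inv, map_pow, e0, e1]
    exact tL2
  · rw [map_mul, map_inv, mul_inv_eq_one, map_mul, map_mul, map_mul, map_pow, map_inv,
      map_pow, map_mul, map_mul, map_mul, map_inv, map_mul, map_mul, map_inv, e0, e1, e2]
    exact tL3
  · rw [map_mul, map_inv, mul_inv_eq_one, map_mul, map_pow, map_mul, map_mul, map_inv,
      e0, e1, e2]
    exact tL4
  · rw [map_mul, map_inv, mul_inv_eq_one, map_mul, map_mul, map_mul, map_inv, e0, e1, e2]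
    exact tL5
  · rw [map_pow, e2]
    exact tL6

/-- the map defining `φ : T →* GFin`. -/
def fphi : ℕ ⊕ ℕ → GFin := Sum.elim Xg Cg

lemma hphi : ∀ r ∈ TRel, FreeGroup.lift fphi r = 1 := by
  intro r hr
  simp only [TRel, Set.mem_setOf_eq] at hr
  rcases hr with ⟨i, j, hij, rfl⟩ | ⟨k, n, hkn, rfl⟩ | ⟨n, rfl⟩ | ⟨n, rfl⟩ | ⟨n, rfl⟩ <;>
    simp only [map_mul, map_inv, map_pow, FreeGroup.lift_apply_of, fphi, Sum.elim_inl, Sum.elim_inr,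
      mul_inv_eq_one]
  · exact Xg_R1 hij
  · exact Cg_R2 k n hkn
  · exact Cg_R3 n
  · exact Cg_R4 n
  · exact Cg_R5 n

def φT : ThompsonT →* GFin := PresentedGroup.toGroup hphi
def ψT : GFin →* ThompsonT := PresentedGroup.toGroup hpsi

lemma ψT_A : ψT Ag = x 0 := PresentedGroup.toGroup.of hpsi
lemma ψT_B : ψT Bg = x 1 := PresentedGroup.toGroup.of hpsi
lemma ψT_T : ψT Tg = c 1 := PresentedGroup.toGroup.of hpsi

lemma ψT_Xg (i : ℕ) : ψT (Xg i) = x i := by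
  match i with
  | 0 => exact ψT_A
  | (i+1) =>
    show ψT ((Ag⁻¹) ^ i * Bg * Ag ^ i) = x (i + 1)
    rw [map_mul, map_mul, map_pow, map_inv, map_pow, ψT_A, ψT_B]
    exact (xT_formula i).symm

lemma ψT_Cg (n : ℕ) : ψT (Cg n) = c n := by
  match n with
  | 0 =>
    show ψT (Ag * Tg) = c 0
    rw [map_mul, ψT_A, ψT_T]
    exact cT_zero.symm
  | (n+1) =>
    show ψT ((Ag⁻¹) ^ n * Tg * Bg ^ n) = c (n + 1)
    rw [map_mul, map_mul, map_pow, map_inv, map_pow, ψT_A, ψT_B, ψT_T]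
    exact (cT_formula n).symm

lemma comp1 : ∀ a : ThompsonT, ψT (φT a) = a := by
  have h : ψT.comp φT = MonoidHom.id ThompsonT := by
    apply PresentedGroup.ext
    intro s
    rcases s with i | n
    · show ψT (φT (PresentedGroup.of (Sum.inl i))) = PresentedGroup.of (Sum.inl i)
      rw [show φT (PresentedGroup.of (Sum.inl i)) = Xg i from PresentedGroup.toGroup.of hphi,
        ψT_Xg]
      rfl
    · show ψT (φT (PresentedGroup.of (Sum.inr n))) = PresentedGroup.of (Sum.inr n)
      rw [show φT (PresentedGroup.of (Sum.inr n)) = Cg n from PresentedGroup.toGroup.of hphi,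
        ψT_Cg]
      rfl
  exact fun a => DFunLike.congr_fun h a

lemma comp2 : ∀ g : GFin, φT (ψT g) = g := by
  have h : φT.comp ψT = MonoidHom.id GFin := by
    apply PresentedGroup.ext
    intro s
    match s with
    | 0 =>
      show φT (ψT (PresentedGroup.of 0)) = PresentedGroup.of 0
      rw [show ψT (PresentedGroup.of 0) = x 0 from PresentedGroup.toGroup.of hpsi]
      rw [show φT (x 0) = Xg 0 from PresentedGroup.toGroup.of hphi]
      rfl
    | 1 =>
      show φT (ψT (PresentedGroup.of 1)) = PresentedGroup.of 1
      rw [show ψT (PresentedGroup.of 1) = x 1 from PresentedGroup.toGroup.of hpsi]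
      rw [show φT (x 1) = Xg 1 from PresentedGroup.toGroup.of hphi]
      rw [Xg_one]
      rfl
    | 2 =>
      show φT (ψT (PresentedGroup.of 2)) = PresentedGroup.of 2
      rw [show ψT (PresentedGroup.of 2) = c 1 from PresentedGroup.toGroup.of hpsi]
      rw [show φT (c 1) = Cg 1 from PresentedGroup.toGroup.of hphi]
      rw [Cg_one]
      rfl
  exact fun g => DFunLike.congr_fun h g


/-- Thompson's group `T` is finitely presented: the homomorphism from the finitely
presented group on generators `a, b, t` with the six relators above to `T`,
determined by `a ↦ x_0`, `b ↦ x_1`, `t ↦ c_1`, is an isomorphism. -/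
theorem T_finitely_presented :
    ∃ ψ : PresentedGroup TFinRel →* ThompsonT,
      ψ (PresentedGroup.of 0) = x 0 ∧
      ψ (PresentedGroup.of 1) = x 1 ∧
      ψ (PresentedGroup.of 2) = c 1 ∧
      Function.Bijective ψ := by
  refine ⟨ψT, PresentedGroup.toGroup.of hpsi, PresentedGroup.toGroup.of hpsi,
    PresentedGroup.toGroup.of hpsi, ?_⟩
  exact Function.bijective_iff_has_inverse.mpr ⟨φT, comp2, comp1⟩
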